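/- The determinant of the 5×5 matrix D with rows β₀, β_i, β_j, β_k, β_l and columns β_{ij}, β_{ik}, β_{il}, β_{jk}, β_{jl} of the second Jacobian matrix, i.e. D = [[f_{ij}, f_{ik}, f_{il}, f_{jk}, f_{jl}], [f_j, f_k, f_l, 0, 0], [f_i, 0, 0, f_k, f_l], [0, f_i, 0, f_j, 0], [0, 0, f_i, 0, f_j]], equals 2 f_i f_j · Q_{ij;kl}(F), for distinct indices i, j, k, l. -/

import Mathlib

open MvPolynomial

/-- First partial derivative f_i = ∂F/∂x_i. -/
noncomputable def pd {n : ℕ} (F : MvPolynomial (Fin n) ℂ) (i : Fin n) : MvPolynomial (Fin n) ℂ :=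
  pderiv i F

/-- Second partial derivative f_{ij} = ∂²F/∂x_i∂x_j. -/
noncomputable def pd2 {n : ℕ} (F : MvPolynomial (Fin n) ℂ) (i j : Fin n) : MvPolynomial (Fin n) ℂ :=
  pderiv i (pderiv j F)

/-- Q_{ij;kl}(F) = f_{ik} f_j f_l − f_{jk} f_i f_l − f_{il} f_j f_k + f_{jl} f_i f_k. -/
noncomputable def Qq {n : ℕ} (F : MvPolynomial (Fin n) ℂ) (i j k l : Fin n) :
    MvPolynomial (Fin n) ℂ :=
  pd2 F i k * pd F j * pd F l - pd2 F j k * pd F i * pd F l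
    - pd2 F i l * pd F j * pd F k + pd2 F j l * pd F i * pd F k

/-- Second Jacobian matrix: rows β₀,…,β_n (row 0 = β₀, row t.succ = β_t);
columns β_{0k} (Sum.inl k) and β_{ij} (Sum.inr (i,j)). -/
noncomputable def jac2 {n : ℕ} (F : MvPolynomial (Fin n) ℂ) :
    Fin (n + 1) → (Fin n ⊕ Fin n × Fin n) → MvPolynomial (Fin n) ℂ := fun r col =>
  match col with
  | Sum.inl k => if r = 0 then pderiv k F else 0
  | Sum.inr (i, j) =>
      if r = 0 then
        (if i = j then MvPolynomial.C (2⁻¹ : ℂ) * pderiv i (pderiv i F)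
         else pderiv i (pderiv j F))
      else if r = i.succ then pderiv j F
      else if r = j.succ then pderiv i F
      else 0

/-- Jacobian ideal J₁(F) = (∂₁F, …, ∂_nF). -/
noncomputable def J1 {n : ℕ} (F : MvPolynomial (Fin n) ℂ) : Ideal (MvPolynomial (Fin n) ℂ) :=
  Ideal.span (Set.range fun i : Fin n => pderiv i F)

/-- The ideal Q(F) generated by all Q_{ij;kl}(F). -/
noncomputable def QI {n : ℕ} (F : MvPolynomial (Fin n) ℂ) : Ideal (MvPolynomial (Fin n) ℂ) :=
  Ideal.span {q | ∃ i j k l : Fin n, q = Qq F i j k l}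

/-- Second Jacobian ideal: ideal of maximal minors of Jac₂(F). -/
noncomputable def J2 {n : ℕ} (F : MvPolynomial (Fin n) ℂ) : Ideal (MvPolynomial (Fin n) ℂ) :=
  Ideal.span {d | ∃ c : Fin (n + 1) → (Fin n ⊕ Fin n × Fin n),
    d = Matrix.det (Matrix.of fun a b => jac2 F a (c b))}

set_option maxHeartbeats 1000000 in
private lemma det5_aux {R : Type*} [CommRing R] (a b c d e p q r s : R) :
    Matrix.det !![a,b,c,d,e; q,r,s,0,0; p,0,0,r,s; 0,p,0,q,0; 0,0,p,0,q]
      = 2*p*q*(b*q*s - d*p*s - c*q*r + e*p*r) := by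
  simp [Matrix.det_succ_row_zero, Fin.sum_univ_succ, Fin.succAbove]
  ring

theorem stmt7 {n : ℕ} (F : MvPolynomial (Fin n) ℂ) (i j k l : Fin n)
    (hij : i ≠ j) (hik : i ≠ k) (hil : i ≠ l) (hjk : j ≠ k) (hjl : j ≠ l) (hkl : k ≠ l) :
    Matrix.det !![pd2 F i j, pd2 F i k, pd2 F i l, pd2 F j k, pd2 F j l;
        pd F j, pd F k, pd F l, 0, 0;
        pd F i, 0, 0, pd F k, pd F l;
        0, pd F i, 0, pd F j, 0;
        0, 0, pd F i, 0, pd F j] = 2 * pd F i * pd F j * Qq F i j k l := by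
  rw [det5_aux, Qq]
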